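/- (Abel-type Tauberian bound) For a bounded sequence c : ℕ → ℝ, limsup_{λ→1⁻} (1-λ) Σ_{i=0}^∞ λ^i c(i) ≤ limsup_{T→∞} (1/(T+1)) Σ_{i=0}^T c(i). -/

import Mathlib

open Filter


private lemma abel_fin' (c : ℕ → ℝ) (l : ℝ) (n : ℕ) :
    ∑ T ∈ Finset.range (n + 1), l ^ T * c T
      = l ^ n * (∑ i ∈ Finset.range (n + 1), c i)
        + (1 - l) * ∑ T ∈ Finset.range n, l ^ T * (∑ i ∈ Finset.range (T + 1), c i) := by
  induction n with
  | zero => simp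
  | succ n ih =>
      rw [Finset.sum_range_succ (fun T => l ^ T * c T), ih,
        Finset.sum_range_succ (fun T => l ^ T * (∑ i ∈ Finset.range (T + 1), c i)),
        Finset.sum_range_succ c (n + 1)]
      ring

private lemma abel_tsum (c : ℕ → ℝ) (M : ℝ) (hM : ∀ i, |c i| ≤ M) {l : ℝ}
    (hl0 : 0 ≤ l) (hl1 : l < 1) :
    ∑' i, l ^ i * c i
      = (1 - l) * ∑' T, l ^ T * (∑ i ∈ Finset.range (T + 1), c i) := by
  set S : ℕ → ℝ := fun T => ∑ i ∈ Finset.range (T + 1), c i with hS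
  have hgeo : Summable fun i : ℕ => l ^ i := summable_geometric_of_lt_one hl0 hl1
  have habs : ∀ i : ℕ, |l ^ i| = l ^ i := fun i => abs_of_nonneg (pow_nonneg hl0 i)
  have hSbd : ∀ T, |S T| ≤ (T + 1 : ℝ) * M := by
    intro T
    calc |S T| ≤ ∑ i ∈ Finset.range (T + 1), |c i| := Finset.abs_sum_le_sum_abs _ _
    _ ≤ ∑ _i ∈ Finset.range (T + 1), M := Finset.sum_le_sum fun i _ => hM i
    _ = (T + 1 : ℝ) * M := by simp [mul_comm]
  have ha : Summable fun i : ℕ => l ^ i * c i := by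
    apply Summable.of_norm_bounded (g := fun i => l ^ i * M) (hgeo.mul_right M)
    intro i
    rw [Real.norm_eq_abs, abs_mul, habs]
    exact mul_le_mul_of_nonneg_left (hM i) (pow_nonneg hl0 i)
  have hsg : Summable fun T : ℕ => (T + 1 : ℝ) * l ^ T := by
    have h1 : Summable fun T : ℕ => (T : ℝ) * l ^ T := by
      have : ‖l‖ < 1 := by rwa [Real.norm_eq_abs, abs_of_nonneg hl0]
      exact (hasSum_coe_mul_geometric_of_norm_lt_one this).summable
    have := h1.add hgeo
    convert this using 1; funext T; ring
  have hgbd : ∀ T : ℕ, ‖l ^ T * S T‖ ≤ (T + 1 : ℝ) * l ^ T * M := by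
    intro T
    rw [Real.norm_eq_abs, abs_mul, habs]
    calc l ^ T * |S T| ≤ l ^ T * ((T + 1 : ℝ) * M) :=
          mul_le_mul_of_nonneg_left (hSbd T) (pow_nonneg hl0 T)
    _ = (T + 1 : ℝ) * l ^ T * M := by ring
  have hg : Summable fun T : ℕ => l ^ T * S T :=
    Summable.of_norm_bounded (hsg.mul_right M) hgbd
  have htend : Tendsto (fun n : ℕ => l ^ n * S n) atTop (nhds 0) :=
    squeeze_zero_norm hgbd (hsg.mul_right M).tendsto_atTop_zero
  have hL : Tendsto (fun n : ℕ => ∑ T ∈ Finset.range (n + 1), l ^ T * c T)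
      atTop (nhds (∑' i, l ^ i * c i)) :=
    ha.hasSum.tendsto_sum_nat.comp (tendsto_add_atTop_nat 1)
  have hR : Tendsto
      (fun n : ℕ => l ^ n * S n + (1 - l) * ∑ T ∈ Finset.range n, l ^ T * S T)
      atTop (nhds (0 + (1 - l) * ∑' T, l ^ T * S T)) :=
    htend.add (hg.hasSum.tendsto_sum_nat.const_mul (1 - l))
  have heq : (fun n : ℕ => ∑ T ∈ Finset.range (n + 1), l ^ T * c T)
      = fun n : ℕ => l ^ n * S n + (1 - l) * ∑ T ∈ Finset.range n, l ^ T * S T := by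
    funext n; exact abel_fin' c l n
  rw [heq] at hL
  have := tendsto_nhds_unique hL hR
  rwa [zero_add] at this


private lemma abel_fin (c : ℕ → ℝ) (l : ℝ) (n : ℕ) :
    ∑ T ∈ Finset.range (n + 1), l ^ T * c T
      = l ^ n * (∑ i ∈ Finset.range (n + 1), c i)
        + (1 - l) * ∑ T ∈ Finset.range n, l ^ T * (∑ i ∈ Finset.range (T + 1), c i) := by
  induction n with
  | zero => simp
  | succ n ih =>
      rw [Finset.sum_range_succ (fun T => l ^ T * c T), ih,
        Finset.sum_range_succ (fun T => l ^ T * (∑ i ∈ Finset.range (T + 1), c i)),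
        Finset.sum_range_succ c (n + 1)]
      ring

private lemma hasSum_succ_geom {l : ℝ} (hl0 : 0 ≤ l) (hl1 : l < 1) :
    HasSum (fun T : ℕ => (T + 1 : ℝ) * l ^ T) (((1 - l) ^ 2)⁻¹) := by
  have h1 : HasSum (fun T : ℕ => (T : ℝ) * l ^ T) (l / (1 - l) ^ 2) := by
    have : ‖l‖ < 1 := by rwa [Real.norm_eq_abs, abs_of_nonneg hl0]
    exact hasSum_coe_mul_geometric_of_norm_lt_one this
  have h2 : HasSum (fun T : ℕ => l ^ T) ((1 - l)⁻¹) := hasSum_geometric_of_lt_one hl0 hl1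
  have h := h1.add h2
  have hne : (1 : ℝ) - l ≠ 0 := by linarith [hl1]
  have hfun : (fun T : ℕ => (T : ℝ) * l ^ T + l ^ T) = fun T : ℕ => (T + 1 : ℝ) * l ^ T := by
    funext T; ring
  have hval : l / (1 - l) ^ 2 + (1 - l)⁻¹ = ((1 - l) ^ 2)⁻¹ := by
    field_simp; ring
  rwa [hfun, hval] at h

set_option maxHeartbeats 1000000

/-- Abel-type Tauberian bound: for a bounded sequence `c`,
`limsup_{λ→1⁻} (1-λ) ∑ λ^i c i ≤ limsup_T (1/(T+1)) ∑_{i=0}^T c i`. -/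
theorem stmt_3 (c : ℕ → ℝ) (M : ℝ) (hM : ∀ i, |c i| ≤ M) :
    Filter.limsup (fun l : ℝ => (1 - l) * (∑' i, l ^ i * c i))
        (nhdsWithin 1 (Set.Ico (0 : ℝ) 1)) ≤
      Filter.limsup (fun T : ℕ => (∑ i ∈ Finset.range (T + 1), c i) / (T + 1))
        Filter.atTop := by
  have hM0 : 0 ≤ M := (abs_nonneg _).trans (hM 0)
  set S : ℕ → ℝ := fun T => ∑ i ∈ Finset.range (T + 1), c i with hSdef
  set A : ℕ → ℝ := fun T => (∑ i ∈ Finset.range (T + 1), c i) / (T + 1) with hAdef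
  have hSbd : ∀ T, |S T| ≤ ((T : ℝ) + 1) * M := by
    intro T
    calc |S T| ≤ ∑ i ∈ Finset.range (T + 1), |c i| := Finset.abs_sum_le_sum_abs _ _
    _ ≤ ∑ _i ∈ Finset.range (T + 1), M := Finset.sum_le_sum fun i _ => hM i
    _ = ((T : ℝ) + 1) * M := by simp [mul_comm]
  have hAbd : ∀ T, |A T| ≤ M := by
    intro T
    have hT : (0 : ℝ) < (T : ℝ) + 1 := by positivity
    rw [hAdef]
    simp only [abs_div, abs_of_pos hT, div_le_iff₀ hT]
    calc |∑ i ∈ Finset.range (T + 1), c i| ≤ ((T : ℝ) + 1) * M := hSbd T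
    _ = M * ((T : ℝ) + 1) := mul_comm _ _
  haveI hNB : (nhdsWithin (1 : ℝ) (Set.Ico 0 1)).NeBot := by
    apply mem_closure_iff_nhdsWithin_neBot.mp
    rw [closure_Ico (by norm_num : (0 : ℝ) ≠ 1)]
    constructor <;> norm_num
  set L := limsup A atTop with hLdef
  apply le_of_forall_pos_le_add
  intro ε hε
  have hbdd : IsBoundedUnder (· ≤ ·) atTop A :=
    ⟨M, eventually_map.mpr (Filter.Eventually.of_forall fun T : ℕ => (abs_le.mp (hAbd T)).2)⟩
  have hev : ∀ᶠ T in atTop, A T < L + ε / 2 :=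
    eventually_lt_of_limsup_lt (by rw [← hLdef]; linarith) hbdd
  obtain ⟨N, hN⟩ := eventually_atTop.mp hev
  set L' := L + ε / 2 with hL'def
  set C := ∑ T ∈ Finset.range N, ((T : ℝ) + 1) * |A T - L'| with hCdef
  have hC0 : 0 ≤ C := Finset.sum_nonneg fun T _ => by positivity
  -- KEY CLAIM
  have key : ∀ l : ℝ, l ∈ Set.Ico (0 : ℝ) 1 →
      (1 - l) * (∑' i, l ^ i * c i) ≤ L' + (1 - l) ^ 2 * C := by
    rintro l ⟨hl0, hl1⟩
    have hpos : (0 : ℝ) < 1 - l := by linarith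
    rw [abel_tsum c M hM hl0 hl1]
    have hgs : HasSum (fun T : ℕ => ((T : ℝ) + 1) * l ^ T) (((1 - l) ^ 2)⁻¹) :=
      hasSum_succ_geom hl0 hl1
    set d : ℕ → ℝ := fun T => A T - L' with hddef
    have hST : ∀ T : ℕ, l ^ T * S T
        = ((T : ℝ) + 1) * l ^ T * L' + ((T : ℝ) + 1) * l ^ T * d T := by
      intro T
      have hT : ((T : ℝ) + 1) ≠ 0 := by positivity
      have h1 : ((T : ℝ) + 1) * A T = S T := by
        rw [hAdef]; field_simp; rfl
      simp only [hddef]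
      linear_combination l ^ T * h1.symm
    have hdbd : ∀ T : ℕ, |d T| ≤ M + |L'| := by
      intro T
      calc |d T| ≤ |A T| + |L'| := abs_sub (A T) L'
      _ ≤ M + |L'| := by linarith [hAbd T]
    have hsum_d : Summable fun T : ℕ => ((T : ℝ) + 1) * l ^ T * d T := by
      apply Summable.of_norm_bounded (g := fun T : ℕ => ((T : ℝ) + 1) * l ^ T * (M + |L'|))
        (hgs.summable.mul_right _)
      intro T
      rw [Real.norm_eq_abs, abs_mul]
      have h1 : |((T : ℝ) + 1) * l ^ T| = ((T : ℝ) + 1) * l ^ T :=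
        abs_of_nonneg (by positivity)
      rw [h1]
      exact mul_le_mul_of_nonneg_left (hdbd T) (by positivity)
    have hsum_1 : HasSum (fun T : ℕ => ((T : ℝ) + 1) * l ^ T * L')
        (((1 - l) ^ 2)⁻¹ * L') := hgs.mul_right L'
    have hsplit : ∑' T, l ^ T * S T
        = ((1 - l) ^ 2)⁻¹ * L' + ∑' T : ℕ, ((T : ℝ) + 1) * l ^ T * d T := by
      rw [tsum_congr hST, Summable.tsum_add hsum_1.summable hsum_d, hsum_1.tsum_eq]
    set w : ℕ → ℝ := fun T => if T < N then ((T : ℝ) + 1) * |d T| else 0 with hwdef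
    have hw_sum : Summable w := by
      apply summable_of_ne_finset_zero (s := Finset.range N)
      intro T hT
      simp only [hwdef, if_neg (fun h => hT (Finset.mem_range.mpr h))]
    have hle : ∀ T : ℕ, ((T : ℝ) + 1) * l ^ T * d T ≤ w T := by
      intro T
      by_cases h : T < N
      · simp only [hwdef, if_pos h]
        have hl1' : l ^ T ≤ 1 := pow_le_one₀ hl0 hl1.le
        calc ((T : ℝ) + 1) * l ^ T * d T ≤ ((T : ℝ) + 1) * l ^ T * |d T| :=
              mul_le_mul_of_nonneg_left (le_abs_self _) (by positivity)
        _ ≤ ((T : ℝ) + 1) * 1 * |d T| := by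
              apply mul_le_mul_of_nonneg_right _ (abs_nonneg _)
              exact mul_le_mul_of_nonneg_left hl1' (by positivity)
        _ = ((T : ℝ) + 1) * |d T| := by ring
      · simp only [hwdef, if_neg h]
        have hd0 : d T ≤ 0 := by
          have := hN T (le_of_not_gt h)
          simp only [hddef]; linarith
        exact mul_nonpos_of_nonneg_of_nonpos (by positivity) hd0
    have htsum_d : ∑' T : ℕ, ((T : ℝ) + 1) * l ^ T * d T ≤ ∑' T : ℕ, w T :=
      Summable.tsum_le_tsum hle hsum_d hw_sum
    have hwt : ∑' T : ℕ, w T = C := by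
      rw [tsum_eq_sum (s := Finset.range N)
        (fun T hT => by simp only [hwdef, if_neg (fun h => hT (Finset.mem_range.mpr h))])]
      apply Finset.sum_congr rfl
      intro T hT
      simp only [hwdef, if_pos (Finset.mem_range.mp hT), hddef]
    rw [hwt] at htsum_d
    rw [hsplit]
    have hinv : (1 - l) ^ 2 * ((1 - l) ^ 2)⁻¹ = 1 :=
      mul_inv_cancel₀ (by positivity)
    have hsq : (0 : ℝ) < (1 - l) ^ 2 := by positivity
    have hmul := mul_le_mul_of_nonneg_left htsum_d hsq.le
    calc (1 - l) * ((1 - l) * (((1 - l) ^ 2)⁻¹ * L' + ∑' T : ℕ, ((T : ℝ) + 1) * l ^ T * d T))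
        = (1 - l) ^ 2 * ((1 - l) ^ 2)⁻¹ * L'
          + (1 - l) ^ 2 * ∑' T : ℕ, ((T : ℝ) + 1) * l ^ T * d T := by ring
    _ = L' + (1 - l) ^ 2 * ∑' T : ℕ, ((T : ℝ) + 1) * l ^ T * d T := by rw [hinv, one_mul]
    _ ≤ L' + (1 - l) ^ 2 * C := by linarith
  -- eventual smallness of the error term
  have htc : Tendsto (fun l : ℝ => (1 - l) ^ 2 * C)
      (nhdsWithin 1 (Set.Ico (0 : ℝ) 1)) (nhds 0) := by
    have hcont : Continuous fun l : ℝ => (1 - l) ^ 2 * C := by continuity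
    have h1 := hcont.tendsto 1
    simp only [sub_self, ne_eq, OfNat.ofNat_ne_zero, not_false_eq_true, zero_pow,
      zero_mul] at h1
    exact h1.mono_left nhdsWithin_le_nhds
  have h2 : ∀ᶠ l in nhdsWithin (1 : ℝ) (Set.Ico 0 1), (1 - l) ^ 2 * C < ε / 2 :=
    htc.eventually_lt_const (by linarith)
  have h3 : ∀ᶠ l in nhdsWithin (1 : ℝ) (Set.Ico 0 1),
      (1 - l) * (∑' i, l ^ i * c i) ≤ L + ε := by
    filter_upwards [self_mem_nhdsWithin, h2] with l hl h2l
    have := key l hl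
    rw [hL'def] at this
    linarith
  -- coboundedness of the LHS
  have hlow : ∀ᶠ l in nhdsWithin (1 : ℝ) (Set.Ico 0 1),
      -M ≤ (1 - l) * (∑' i, l ^ i * c i) := by
    filter_upwards [self_mem_nhdsWithin] with l hl
    obtain ⟨hl0, hl1⟩ := hl
    have hpos : (0 : ℝ) < 1 - l := by linarith
    have hgeo : Summable fun i : ℕ => l ^ i := summable_geometric_of_lt_one hl0 hl1
    have ha : Summable fun i : ℕ => l ^ i * c i := by
      apply Summable.of_norm_bounded (g := fun i => l ^ i * M) (hgeo.mul_right M)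
      intro i
      rw [Real.norm_eq_abs, abs_mul, abs_of_nonneg (pow_nonneg hl0 i)]
      exact mul_le_mul_of_nonneg_left (hM i) (pow_nonneg hl0 i)
    have hbd : |∑' i, l ^ i * c i| ≤ M * (1 - l)⁻¹ := by
      have h0 : ‖∑' i, l ^ i * c i‖ ≤ ∑' i : ℕ, ‖l ^ i * c i‖ :=
        norm_tsum_le_tsum_norm (ha.abs.congr fun i => (Real.norm_eq_abs _).symm)
      simp only [Real.norm_eq_abs] at h0
      calc |∑' i, l ^ i * c i| ≤ ∑' i : ℕ, |l ^ i * c i| := h0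
      _ ≤ ∑' i : ℕ, M * l ^ i := by
            apply Summable.tsum_le_tsum _ ha.abs (hgeo.mul_left M)
            intro i
            rw [abs_mul, abs_of_nonneg (pow_nonneg hl0 i)]
            calc l ^ i * |c i| ≤ l ^ i * M :=
                  mul_le_mul_of_nonneg_left (hM i) (pow_nonneg hl0 i)
            _ = M * l ^ i := mul_comm _ _
      _ = M * (1 - l)⁻¹ := by
            rw [tsum_mul_left, tsum_geometric_of_lt_one hl0 hl1]
    have h1 : (1 - l) * |∑' i, l ^ i * c i| ≤ M := by
      calc (1 - l) * |∑' i, l ^ i * c i| ≤ (1 - l) * (M * (1 - l)⁻¹) :=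
            mul_le_mul_of_nonneg_left hbd hpos.le
      _ = M := by field_simp
    have := neg_abs_le ((1 - l) * (∑' i, l ^ i * c i))
    rw [abs_mul, abs_of_pos hpos] at this
    linarith
  have hcb : IsCoboundedUnder (· ≤ ·) (nhdsWithin (1 : ℝ) (Set.Ico 0 1))
      (fun l : ℝ => (1 - l) * (∑' i, l ^ i * c i)) :=
    IsBoundedUnder.isCoboundedUnder_le ⟨-M, eventually_map.mpr hlow⟩
  exact limsup_le_of_le hcb h3
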